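/- Define f_δ(α) = 2φ(α)/(α + 2(φ(α) - αΦ(-α))) for α ∈ [0,∞). Then f_δ is strictly decreasing on [0,∞), with f_δ(0) = 1 and f_δ(α) → 0 as α → ∞. -/

import Mathlib

open MeasureTheory Filter

/-- Standard Gaussian density `φ(z) = e^{-z²/2}/√(2π)`. -/
noncomputable def gaussPdf (z : ℝ) : ℝ := Real.exp (-z ^ 2 / 2) / Real.sqrt (2 * Real.pi)

/-- Standard Gaussian CDF `Φ(x) = ∫_{-∞}^x φ(z) dz`. -/
noncomputable def gaussCdf (x : ℝ) : ℝ := ∫ z in Set.Iic x, gaussPdf z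

/-- `f_δ(α) = 2φ(α)/(α + 2(φ(α) - αΦ(-α)))`. -/
noncomputable def fDelta (α : ℝ) : ℝ :=
  2 * gaussPdf α / (α + 2 * (gaussPdf α - α * gaussCdf (-α)))

lemma gaussPdf_pos (z : ℝ) : 0 < gaussPdf z :=
  div_pos (Real.exp_pos _) (Real.sqrt_pos.2 (by positivity))

lemma gaussPdf_neg (z : ℝ) : gaussPdf (-z) = gaussPdf z := by
  simp [gaussPdf]

lemma gaussPdf_integrable : Integrable gaussPdf := by
  have h := (integrable_exp_neg_mul_sq (show (0:ℝ) < 1/2 by norm_num)).div_const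
    (Real.sqrt (2 * Real.pi))
  convert h using 2 with x
  simp only [gaussPdf]
  ring_nf

lemma gaussPdf_integral : ∫ z, gaussPdf z = 1 := by
  have h : (∫ x : ℝ, Real.exp (-(1/2) * x ^ 2)) = Real.sqrt (2 * Real.pi) := by
    rw [integral_gaussian (1/2 : ℝ)]; congr 1; ring
  have h2 : ∫ z, gaussPdf z = (∫ x : ℝ, Real.exp (-(1/2) * x ^ 2)) / Real.sqrt (2 * Real.pi) := by
    rw [← integral_div]
    congr 1 with x
    simp only [gaussPdf]
    ring_nf
  rw [h2, h, div_self (by positivity)]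

lemma gaussCdf_neg_eq (α : ℝ) : gaussCdf (-α) = ∫ z in Set.Ioi α, gaussPdf z := by
  have h : gaussCdf (-α) = ∫ z in Set.Iic (-α), gaussPdf (-z) := by
    unfold gaussCdf; simp [gaussPdf_neg]
  rw [h, integral_comp_neg_Iic, neg_neg]

lemma gaussCdf_add (α : ℝ) : gaussCdf α + gaussCdf (-α) = 1 := by
  rw [gaussCdf_neg_eq]
  unfold gaussCdf
  rw [intervalIntegral.integral_Iic_add_Ioi gaussPdf_integrable.integrableOn
    gaussPdf_integrable.integrableOn, gaussPdf_integral]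

lemma one_sub_two_cdf (α : ℝ) :
    1 - 2 * gaussCdf (-α) = 2 * ∫ t in (0:ℝ)..α, gaussPdf t := by
  have hab : gaussCdf α - gaussCdf (-α) = ∫ t in (-α)..α, gaussPdf t :=
    intervalIntegral.integral_Iic_sub_Iic gaussPdf_integrable.integrableOn
      gaussPdf_integrable.integrableOn
  have hsplit : (∫ t in (-α)..(0:ℝ), gaussPdf t) + ∫ t in (0:ℝ)..α, gaussPdf t
      = ∫ t in (-α)..α, gaussPdf t :=
    intervalIntegral.integral_add_adjacent_intervals gaussPdf_integrable.intervalIntegrable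
      gaussPdf_integrable.intervalIntegrable
  have hrefl : (∫ t in (-α)..(0:ℝ), gaussPdf t) = ∫ t in (0:ℝ)..α, gaussPdf t := by
    have h := intervalIntegral.integral_comp_neg (a := (0:ℝ)) (b := α) (f := gaussPdf)
    simp only [gaussPdf_neg, neg_zero] at h
    exact h.symm
  have hadd := gaussCdf_add α
  linarith

lemma fDelta_eq (α : ℝ) :
    fDelta α = gaussPdf α / (gaussPdf α + α * ∫ t in (0:ℝ)..α, gaussPdf t) := by
  unfold fDelta
  have h1 := one_sub_two_cdf α
  have key : α + 2 * (gaussPdf α - α * gaussCdf (-α))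
      = 2 * (gaussPdf α + α * ∫ t in (0:ℝ)..α, gaussPdf t) := by
    linear_combination α * h1
  rw [key, mul_div_mul_left _ _ (two_ne_zero)]

noncomputable def kF (α : ℝ) : ℝ := α * (∫ t in (0:ℝ)..α, gaussPdf t) / gaussPdf α

lemma fDelta_eq' (α : ℝ) : fDelta α = 1 / (1 + kF α) := by
  rw [fDelta_eq]
  have hφ := (gaussPdf_pos α).ne'
  have h : 1 + kF α = (gaussPdf α + α * ∫ t in (0:ℝ)..α, gaussPdf t) / gaussPdf α := by
    unfold kF; field_simp
  rw [h, one_div_div]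

lemma gInt_nonneg {α : ℝ} (hα : 0 ≤ α) : 0 ≤ ∫ t in (0:ℝ)..α, gaussPdf t :=
  intervalIntegral.integral_nonneg hα (fun t _ => (gaussPdf_pos t).le)

lemma gInt_lt {a b : ℝ} (hab : a < b) :
    (∫ t in (0:ℝ)..a, gaussPdf t) < ∫ t in (0:ℝ)..b, gaussPdf t := by
  have hsplit : (∫ t in (0:ℝ)..a, gaussPdf t) + ∫ t in a..b, gaussPdf t
      = ∫ t in (0:ℝ)..b, gaussPdf t :=
    intervalIntegral.integral_add_adjacent_intervals gaussPdf_integrable.intervalIntegrable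
      gaussPdf_integrable.intervalIntegrable
  have hpos : 0 < ∫ t in a..b, gaussPdf t :=
    intervalIntegral.intervalIntegral_pos_of_pos
      gaussPdf_integrable.intervalIntegrable (fun t => gaussPdf_pos t) hab
  linarith

lemma gInt_pos {b : ℝ} (hb : 0 < b) : 0 < ∫ t in (0:ℝ)..b, gaussPdf t := by
  have h := gInt_lt hb
  simpa using h

lemma gaussPdf_anti {a b : ℝ} (ha : 0 ≤ a) (hab : a < b) : gaussPdf b < gaussPdf a := by
  unfold gaussPdf
  have h2 : -b ^ 2 / 2 < -a ^ 2 / 2 := by nlinarith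
  exact div_lt_div_of_pos_right (Real.exp_lt_exp.2 h2) (Real.sqrt_pos.2 (by positivity))

lemma kF_nonneg {α : ℝ} (hα : 0 ≤ α) : 0 ≤ kF α :=
  div_nonneg (mul_nonneg hα (gInt_nonneg hα)) (gaussPdf_pos α).le

lemma kF_lt {a b : ℝ} (ha : 0 ≤ a) (hab : a < b) : kF a < kF b := by
  have hb : 0 < b := lt_of_le_of_lt ha hab
  have hpa := gaussPdf_pos a
  have hpb := gaussPdf_pos b
  have hg := gInt_lt hab
  have hga := gInt_nonneg ha
  have hgb := gInt_pos hb
  have hpba : gaussPdf b ≤ gaussPdf a := (gaussPdf_anti ha hab).le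
  have h1 : kF a ≤ a * (∫ t in (0:ℝ)..b, gaussPdf t) / gaussPdf b := by
    unfold kF
    gcongr
  have h2 : a * (∫ t in (0:ℝ)..b, gaussPdf t) / gaussPdf b < kF b := by
    unfold kF
    exact div_lt_div_of_pos_right (by nlinarith) hpb
  linarith

lemma kF_ge_sq {α : ℝ} (hα : 0 ≤ α) : α ^ 2 ≤ kF α := by
  have hpα := gaussPdf_pos α
  have hle : α * gaussPdf α ≤ ∫ t in (0:ℝ)..α, gaussPdf t := by
    have h := intervalIntegral.integral_mono_on (a := (0:ℝ)) (b := α)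
      (f := fun _ => gaussPdf α) (g := gaussPdf) hα
      intervalIntegrable_const gaussPdf_integrable.intervalIntegrable
      (fun x hx => by
        rcases eq_or_lt_of_le hx.2 with h | h
        · simp [h]
        · exact (gaussPdf_anti hx.1 h).le)
    simpa [mul_comm] using h
  have : α ^ 2 = α * (α * gaussPdf α) / gaussPdf α := by field_simp
  rw [this]
  unfold kF
  gcongr

/-- `f_δ` is strictly decreasing on `[0,∞)`, with `f_δ(0) = 1` and `f_δ(α) → 0` as `α → ∞`. -/
theorem fDelta_strictAnti :
    StrictAntiOn fDelta (Set.Ici (0 : ℝ)) ∧ fDelta 0 = 1 ∧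
    Tendsto fDelta atTop (nhds 0) := by
  refine ⟨?_, ?_, ?_⟩
  · intro a ha b hb hab
    rw [fDelta_eq', fDelta_eq']
    have h1 : (0:ℝ) < 1 + kF a := by linarith [kF_nonneg ha]
    exact one_div_lt_one_div_of_lt h1 (by linarith [kF_lt ha hab])
  · rw [fDelta_eq']
    simp [kF]
  · have hmaj : Tendsto (fun α : ℝ => 1 / (1 + α ^ 2)) atTop (nhds 0) := by
      have h : Tendsto (fun α : ℝ => 1 + α ^ 2) atTop atTop :=
        tendsto_atTop_add_const_left _ 1 (tendsto_pow_atTop two_ne_zero)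
      simp only [one_div]; exact h.inv_tendsto_atTop
    apply tendsto_of_tendsto_of_tendsto_of_le_of_le' tendsto_const_nhds hmaj
    · filter_upwards [eventually_ge_atTop (0:ℝ)] with α hα
      rw [fDelta_eq']
      have h1 : (0:ℝ) < 1 + kF α := by linarith [kF_nonneg hα]
      positivity
    · filter_upwards [eventually_ge_atTop (0:ℝ)] with α hα
      rw [fDelta_eq']
      have h1 : (0:ℝ) < 1 + α ^ 2 := by positivity
      exact one_div_le_one_div_of_le h1 (by linarith [kF_ge_sq hα])
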